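/- (Moser iteration convergence) Let χ > 1 and let (tᵢ) be defined by tᵢ = t₀ χⁱ for some t₀ > 0. Suppose (mᵢ) is a sequence of nonnegative reals with m_{i+1} ≤ (2χ)^{Ci/χⁱ} mᵢ + C/χⁱ for all i ≥ 0 and some C > 0. Then the sequence (mᵢ) is bounded by a constant depending only on χ, C, and m₀. -/
import Mathlib


/-- Abstract Moser iteration convergence: if `χ > 1`, `C > 0` and the nonnegative
sequence `m` satisfies `m (i+1) ≤ (2χ)^(C i / χ^i) * m i + C / χ^i`, then `m` is bounded. -/
theorem moser_iteration_bounded (χ C : ℝ) (hχ : 1 < χ) (hC : 0 < C)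
    (m : ℕ → ℝ) (hm : ∀ i, 0 ≤ m i)
    (hrec : ∀ i : ℕ, m (i + 1) ≤ (2 * χ) ^ (C * i / χ ^ i) * m i + C / χ ^ i) :
    ∃ M : ℝ, ∀ i, m i ≤ M := by
  have hχ0 : (0:ℝ) < χ := lt_trans one_pos hχ
  have h2χ : (1:ℝ) ≤ 2 * χ := by nlinarith
  have h2χ0 : (0:ℝ) < 2 * χ := by nlinarith
  set r : ℝ := χ⁻¹ with hr
  have hr0 : (0:ℝ) ≤ r := (inv_pos.mpr hχ0).le
  have hr1 : r < 1 := inv_lt_one_of_one_lt₀ hχ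
  have hrn : ‖r‖ < 1 := by rwa [Real.norm_eq_abs, abs_of_nonneg hr0]
  -- summability facts
  have hs1 : Summable (fun i : ℕ => (i:ℝ) * r ^ i) := by
    simpa using summable_pow_mul_geometric_of_norm_lt_one 1 hrn
  have hs2 : Summable (fun i : ℕ => r ^ i) := summable_geometric_of_lt_one hr0 hr1
  set T1 : ℝ := ∑' i : ℕ, (i:ℝ) * r ^ i with hT1
  set T2 : ℝ := ∑' i : ℕ, r ^ i with hT2
  have hsum1 : ∀ n, ∑ i ∈ Finset.range n, (i:ℝ) * r ^ i ≤ T1 := fun n =>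
    Summable.sum_le_tsum _ (fun i _ => by positivity) hs1
  have hsum2 : ∀ n, ∑ i ∈ Finset.range n, r ^ i ≤ T2 := fun n =>
    Summable.sum_le_tsum _ (fun i _ => by positivity) hs2
  have key : ∀ n, m n ≤ (2 * χ) ^ (C * ∑ i ∈ Finset.range n, (i:ℝ) * r ^ i)
      * (m 0 + C * ∑ i ∈ Finset.range n, r ^ i) := by
    intro n
    induction n with
    | zero => simp
    | succ n ih =>
      have hrecn := hrec n
      have hpow : (χ : ℝ) ^ n ≠ 0 := by positivity
      have hrep : C * n / χ ^ n = C * ((n:ℝ) * r ^ n) := by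
        rw [hr, inv_pow]; field_simp
      have hrep2 : C / χ ^ n = C * r ^ n := by
        rw [hr, inv_pow]; field_simp
      set a : ℝ := (2 * χ) ^ (C * ((n:ℝ) * r ^ n)) with ha
      set P : ℝ := (2 * χ) ^ (C * ∑ i ∈ Finset.range n, (i:ℝ) * r ^ i) with hP
      set B : ℝ := m 0 + C * ∑ i ∈ Finset.range n, r ^ i with hB
      have hP1 : (1:ℝ) ≤ P := Real.one_le_rpow h2χ (by positivity)
      have ha1 : (1:ℝ) ≤ a := Real.one_le_rpow h2χ (by positivity)
      have hB0 : 0 ≤ B := by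
        have h : 0 ≤ C * ∑ i ∈ Finset.range n, r ^ i := mul_nonneg hC.le (Finset.sum_nonneg fun i _ => pow_nonneg hr0 i)
        rw [hB]; linarith [hm 0]
      have h1 : m (n+1) ≤ a * m n + C * r ^ n := by
        rw [ha, ← hrep, ← hrep2]; exact hrecn
      have h2 : a * m n ≤ a * (P * B) := by
        apply mul_le_mul_of_nonneg_left ih (by linarith)
      have h3 : C * r ^ n ≤ a * P * (C * r ^ n) := by
        have haP : (1:ℝ) ≤ a * P := one_le_mul_of_one_le_of_one_le ha1 hP1
        have hCr : 0 ≤ C * r ^ n := by positivity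
        calc C * r ^ n = 1 * (C * r ^ n) := (one_mul _).symm
          _ ≤ a * P * (C * r ^ n) := mul_le_mul_of_nonneg_right haP hCr
      have heq : (2 * χ) ^ (C * ∑ i ∈ Finset.range (n+1), (i:ℝ) * r ^ i) = a * P := by
        rw [Finset.sum_range_succ, mul_add, Real.rpow_add h2χ0, ha, hP, mul_comm]
      rw [heq, Finset.sum_range_succ]
      have hfin : a * P * (m 0 + C * ((∑ i ∈ Finset.range n, r ^ i) + r ^ n))
          = a * (P * B) + a * P * (C * r ^ n) := by rw [hB]; ring
      rw [hfin]
      linarith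
  refine ⟨(2 * χ) ^ (C * T1) * (m 0 + C * T2), fun n => ?_⟩
  refine (key n).trans ?_
  have hPle : (2 * χ) ^ (C * ∑ i ∈ Finset.range n, (i:ℝ) * r ^ i) ≤ (2 * χ) ^ (C * T1) :=
    Real.rpow_le_rpow_of_exponent_le h2χ
      (mul_le_mul_of_nonneg_left (hsum1 n) hC.le)
  have hBle : m 0 + C * ∑ i ∈ Finset.range n, r ^ i ≤ m 0 + C * T2 := by
    have := mul_le_mul_of_nonneg_left (hsum2 n) hC.le
    linarith
  have hB0 : 0 ≤ m 0 + C * ∑ i ∈ Finset.range n, r ^ i := by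
    have h : 0 ≤ C * ∑ i ∈ Finset.range n, r ^ i := mul_nonneg hC.le (Finset.sum_nonneg fun i _ => pow_nonneg hr0 i)
    linarith [hm 0]
  exact mul_le_mul hPle hBle hB0 (by positivity)
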